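/- Let k be a field of characteristic 2 and let p ∈ k be nonzero. The fixed-point group of the k-involution Inn_{L_p} of SL(2,k), namely H^p = {X ∈ SL(2,k) : L_p·X·L_p⁻¹ = X}, equals the set of 2×2 matrices with rows (a, b) and (p·b, a) where a, b ∈ k satisfy a² + p·b² = 1. -/

import Mathlib

/-- Let k be a field of characteristic 2 and p ∈ k nonzero.
The fixed-point group H^p = {X ∈ SL(2,k) : L_p·X·L_p⁻¹ = X} of Inn_{L_p}
equals the set of matrices !![a,b; p·b,a] with a² + p·b² = 1. -/
theorem stmt_7 {k : Type*} [Field k] [CharP k 2] (p : k) (hp : p ≠ 0) :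
    {X : Matrix (Fin 2) (Fin 2) k | X.det = 1 ∧
        !![(0 : k), 1; p, 0] * X * (!![(0 : k), 1; p, 0])⁻¹ = X} =
      {X : Matrix (Fin 2) (Fin 2) k | ∃ a b : k,
        a ^ 2 + p * b ^ 2 = 1 ∧ X = !![a, b; p * b, a]} := by
  have h2 : (2 : k) = 0 := by exact_mod_cast CharP.cast_eq_zero k 2
  have hinv : (!![(0 : k), 1; p, 0])⁻¹ = !![0, p⁻¹; 1, 0] := by
    apply Matrix.inv_eq_right_inv
    ext i j
    fin_cases i <;> fin_cases j <;>
      simp [Matrix.mul_apply, Fin.sum_univ_two, hp]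
  ext X
  simp only [Set.mem_setOf_eq, hinv]
  constructor
  · rintro ⟨hdet, hcomm⟩
    have e01 := congrFun (congrFun hcomm 0) 1
    have e11 := congrFun (congrFun hcomm 1) 1
    simp [Matrix.mul_apply, Matrix.vecMul, dotProduct,
      Fin.sum_univ_two, hp] at e01 e11
    have hx10 : X 1 0 = p * X 0 1 := by
      field_simp at e01
      linear_combination e01
    have hx11 : X 1 1 = X 0 0 := by
      field_simp at e11
      exact e11.symm
    refine ⟨X 0 0, X 0 1, ?_, ?_⟩
    · rw [Matrix.det_fin_two, hx10, hx11] at hdet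
      linear_combination hdet + (p * X 0 1 ^ 2) * h2
    · ext i j
      fin_cases i <;> fin_cases j <;> simp [hx10, hx11]
  · rintro ⟨a, b, hab, rfl⟩
    refine ⟨?_, ?_⟩
    · rw [Matrix.det_fin_two_of]
      linear_combination hab - p * b ^ 2 * h2
    · ext i j
      fin_cases i <;> fin_cases j <;>
        simp [Matrix.mul_apply, Fin.sum_univ_two, hp, mul_comm p, mul_assoc]
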